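/- A fibration p : E → B has the weakly homotopically unique path lifting property (whupl) if and only if every loop in each fiber of p is nullhomotopic in E, i.e., every loop γ : [0,1] → E with p ∘ γ constant is homotopic relative to {0,1} to the constant loop at γ(0). -/

import Mathlib

universe u

open scoped unitInterval

/-- `p` has the weakly homotopically unique path lifting property (whupl). -/
def Whupl {E B : Type*} [TopologicalSpace E] [TopologicalSpace B] (p : C(E, B)) : Prop :=
  ∀ α β : C(unitInterval, E), α 0 = β 0 → α 1 = β 1 → p.comp α = p.comp β →
    α.HomotopicRel β {0, 1}

/-- `p` is a (Hurewicz) fibration: it has the homotopy lifting property with respect to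
every topological space. -/
def IsFibration {E B : Type*} [TopologicalSpace E] [TopologicalSpace B] (p : C(E, B)) : Prop :=
  ∀ (X : Type u) [TopologicalSpace X] (f : C(X, E)) (F : C(X × unitInterval, B)),
    (∀ x, F (x, 0) = p (f x)) →
    ∃ F' : C(X × unitInterval, E), (∀ z, p (F' z) = F z) ∧ (∀ x, F' (x, 0) = f x)

attribute [local instance] Path.Homotopic.setoid

instance : ContractibleSpace (unitInterval × unitInterval) := by
  have h : Convex ℝ (Set.Icc (0:ℝ) 1 ×ˢ Set.Icc (0:ℝ) 1) :=
    (convex_Icc 0 1).prod (convex_Icc 0 1)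
  have hc : ContractibleSpace ↥(Set.Icc (0:ℝ) 1 ×ˢ Set.Icc (0:ℝ) 1) :=
    h.contractibleSpace ⟨(0,0), by constructor <;> exact ⟨le_refl _, zero_le_one⟩⟩
  exact (Homeomorph.Set.prod _ _).symm.contractibleSpace_iff.mpr hc

/-- The boundary of a square commutes up to path homotopy. -/
lemma square_lemma {E : Type*} [TopologicalSpace E] (H : C(unitInterval × unitInterval, E))
    {v00 v10 v01 v11 : E}
    (h00 : H (0,0) = v00) (h10 : H (1,0) = v10) (h01 : H (0,1) = v01) (h11 : H (1,1) = v11)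
    (bo : Path v00 v10) (ri : Path v10 v11) (le : Path v00 v01) (to_ : Path v01 v11)
    (hbo : ∀ s, bo s = H (s, 0)) (hri : ∀ t, ri t = H (1, t))
    (hle : ∀ t, le t = H (0, t)) (hto : ∀ s, to_ s = H (s, 1)) :
    (bo.trans ri).Homotopic (le.trans to_) := by
  subst h00 h10 h01 h11
  have cb : Continuous (fun s : I => ((s, 0) : I × I)) := by fun_prop
  have cr : Continuous (fun t : I => ((1, t) : I × I)) := by fun_prop
  have cl : Continuous (fun t : I => ((0, t) : I × I)) := by fun_prop
  have ct : Continuous (fun s : I => ((s, 1) : I × I)) := by fun_prop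
  let B : Path ((0,0) : I × I) (1,0) := ⟨⟨_, cb⟩, rfl, rfl⟩
  let R : Path ((1,0) : I × I) (1,1) := ⟨⟨_, cr⟩, rfl, rfl⟩
  let L : Path ((0,0) : I × I) (0,1) := ⟨⟨_, cl⟩, rfl, rfl⟩
  let T : Path ((0,1) : I × I) (1,1) := ⟨⟨_, ct⟩, rfl, rfl⟩
  have hsq : (B.trans R).Homotopic (L.trans T) :=
    SimplyConnectedSpace.paths_homotopic _ _
  have hm := hsq.map (f := H)
  rw [Path.map_trans, Path.map_trans] at hm
  have eb : B.map H.continuous = bo := by ext s; exact (hbo s).symm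
  have er : R.map H.continuous = ri := by ext t; exact (hri t).symm
  have el : L.map H.continuous = le := by ext t; exact (hle t).symm
  have et : T.map H.continuous = to_ := by ext s; exact (hto s).symm
  rwa [eb, er, el, et] at hm

theorem fibration_whupl_iff_loops_in_fibers_nullhomotopic {E B : Type*} [TopologicalSpace E]
    [TopologicalSpace B] (p : C(E, B)) (hp : IsFibration p) :
    Whupl p ↔
    (∀ γ : C(unitInterval, E), γ 0 = γ 1 → (∀ t, p (γ t) = p (γ 0)) →
      γ.HomotopicRel (ContinuousMap.const unitInterval (γ 0)) {0, 1}) := by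
  constructor
  · intro hW γ hγ hfib
    exact hW γ (ContinuousMap.const unitInterval (γ 0)) rfl hγ.symm
      (by ext t; exact hfib t)
  · intro hnull α β h0 h1 hc
    have hpt : ∀ t, p (α t) = p (β t) := fun t => ContinuousMap.congr_fun hc t
    -- paths corresponding to α and β
    let a : Path (α 0) (α 1) := ⟨α, rfl, rfl⟩
    let b : Path (α 0) (α 1) := (⟨β, rfl, rfl⟩ : Path (β 0) (β 1)).cast h0 h1
    let lam : Path (α 0) (α 0) := a.trans b.symm
    -- p ∘ lam is w.trans w.symm, nullhomotopic
    have hmap : lam.map p.continuous =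
        (a.map p.continuous).trans (a.map p.continuous).symm := by
      have hbs : b.symm.map p.continuous = (a.map p.continuous).symm := by
        ext t; exact (hpt (unitInterval.symm t)).symm
      rw [show lam = a.trans b.symm from rfl, Path.map_trans, hbs]
    have K : Path.Homotopy (lam.map p.continuous) (Path.refl (p (α 0))) := by
      rw [hmap]; exact (Path.Homotopy.reflTransSymm (a.map p.continuous)).symm
    -- lift the nullhomotopy via the fibration
    let f : C(ULift I, E) := ⟨fun x => lam x.down, lam.continuous.comp continuous_uliftDown⟩
    let F : C(ULift I × I, B) :=
      ⟨fun z => K (z.2, z.1.down),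
        K.continuous.comp (continuous_snd.prodMk (continuous_uliftDown.comp continuous_fst))⟩
    have hz : ∀ x, F (x, 0) = p (f x) := fun x => K.apply_zero x.down
    obtain ⟨F', hF'p, hF'0⟩ := hp (ULift I) f F hz
    let H : C(I × I, E) :=
      ⟨fun z => F' (ULift.up z.1, z.2),
        F'.continuous.comp ((continuous_uliftUp.comp continuous_fst).prodMk continuous_snd)⟩
    have hH0 : ∀ s, H (s, 0) = lam s := fun s => hF'0 (ULift.up s)
    have hHp : ∀ s t, p (H (s, t)) = K (t, s) := fun s t => hF'p (ULift.up s, t)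
    have e00 : H (0, 0) = α 0 := (hH0 0).trans lam.source
    have e10 : H (1, 0) = α 0 := (hH0 1).trans lam.target
    -- the edge paths
    have cr : Continuous (fun t : I => H (1, t)) := H.continuous.comp (by fun_prop)
    have cl : Continuous (fun t : I => H (0, t)) := H.continuous.comp (by fun_prop)
    have ct : Continuous (fun s : I => H (s, 1)) := H.continuous.comp (by fun_prop)
    let ri : Path (α 0) (H (1, 1)) := ⟨⟨_, cr⟩, e10, rfl⟩
    let le : Path (α 0) (H (0, 1)) := ⟨⟨_, cl⟩, e00, rfl⟩
    let to_ : Path (H (0, 1)) (H (1, 1)) := ⟨⟨_, ct⟩, rfl, rfl⟩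
    -- the square lemma
    have hsq : (lam.trans ri).Homotopic (le.trans to_) :=
      square_lemma H e00 e10 rfl rfl lam ri le to_
        (fun s => (hH0 s).symm) (fun t => rfl) (fun t => rfl) (fun s => rfl)
    -- fiber facts
    have hfle : ∀ t, p (le t) = p (α 0) := by
      intro t
      have := K.eq_fst t (show (0:I) ∈ ({0,1} : Set I) by simp)
      calc p (le t) = K (t, 0) := hHp 0 t
        _ = p (lam 0) := this
        _ = p (α 0) := by rw [lam.source]
    have hfri : ∀ t, p (ri t) = p (α 0) := by
      intro t
      have := K.eq_fst t (show (1:I) ∈ ({0,1} : Set I) by simp)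
      calc p (ri t) = K (t, 1) := hHp 1 t
        _ = p (lam 1) := this
        _ = p (α 0) := by rw [lam.target]
    have hfto : ∀ s, p (to_ s) = p (α 0) := by
      intro s
      calc p (to_ s) = K (1, s) := hHp s 1
        _ = p (α 0) := K.apply_one s
    -- the loop in the fiber
    let μ : Path (α 0) (α 0) := le.trans (to_.trans ri.symm)
    have hfμ : ∀ t, p (μ t) = p (α 0) := by
      intro t
      simp only [μ, Path.trans_apply]
      split_ifs <;> first | exact hfle _ | exact hfto _ | exact hfri _
    -- apply the hypothesis to μ
    have hμ01 : μ.toContinuousMap 0 = μ.toContinuousMap 1 :=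
      μ.source.trans μ.target.symm
    have hμfib : ∀ t, p (μ.toContinuousMap t) = p (μ.toContinuousMap 0) := by
      intro t
      show p (μ t) = p (μ 0)
      rw [hfμ t, hfμ 0]
    have h2 := hnull μ.toContinuousMap hμ01 hμfib
    rw [show (μ.toContinuousMap : C(I,E)) 0 = α 0 from μ.source] at h2
    have hμnull : μ.Homotopic (Path.refl (α 0)) := h2
    -- path-homotopy algebra
    have hlam : lam.Homotopic (Path.refl (α 0)) := by
      have s1 : lam.Homotopic (lam.trans (ri.trans ri.symm)) := by
        have h1 : (Path.refl (α 0)).Homotopic (ri.trans ri.symm) :=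
          ⟨Path.Homotopy.reflTransSymm ri⟩
        exact (Path.Homotopic.symm ⟨Path.Homotopy.transRefl lam⟩).trans
          ((Path.Homotopic.refl lam).hcomp h1)
      have s2 : (lam.trans (ri.trans ri.symm)).Homotopic ((lam.trans ri).trans ri.symm) :=
        Path.Homotopic.symm ⟨Path.Homotopy.transAssoc lam ri ri.symm⟩
      have s3 : ((lam.trans ri).trans ri.symm).Homotopic ((le.trans to_).trans ri.symm) :=
        hsq.hcomp (Path.Homotopic.refl ri.symm)
      have s4 : ((le.trans to_).trans ri.symm).Homotopic (le.trans (to_.trans ri.symm)) :=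
        ⟨Path.Homotopy.transAssoc le to_ ri.symm⟩
      exact s1.trans (s2.trans (s3.trans (s4.trans hμnull)))
    have hab : a.Homotopic b := by
      have t1 : a.Homotopic (a.trans (Path.refl (α 1))) :=
        Path.Homotopic.symm ⟨Path.Homotopy.transRefl a⟩
      have t2 : (a.trans (Path.refl (α 1))).Homotopic (a.trans (b.symm.trans b)) :=
        (Path.Homotopic.refl a).hcomp ⟨Path.Homotopy.reflSymmTrans b⟩
      have t3 : (a.trans (b.symm.trans b)).Homotopic ((a.trans b.symm).trans b) :=
        Path.Homotopic.symm ⟨Path.Homotopy.transAssoc a b.symm b⟩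
      have t4 : ((a.trans b.symm).trans b).Homotopic ((Path.refl (α 0)).trans b) :=
        hlam.hcomp (Path.Homotopic.refl b)
      have t5 : ((Path.refl (α 0)).trans b).Homotopic b := ⟨Path.Homotopy.reflTrans b⟩
      exact t1.trans (t2.trans (t3.trans (t4.trans t5)))
    exact hab
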